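/- Structure theorem for lax composition: suppose λ on 𝒫(A) × 𝒫(B) and μ on 𝒫(B) × 𝒫(C) are nonempty exchange relations and λ • μ has type (k,l). Then there exist disjoint sets K, L ⊆ B with |K| = k, |L| = l such that λ • μ = λ ∘ I_{K,L} ∘ μ, where I_{K,L} is the partial identity relation ((X,Y) ∈ I_{K,L} iff Y \ X = K and X \ Y = L). Moreover, for any disjoint K, L ⊆ B with |K| = k, |L| = l such that λ ∘ I_{K,L} ∘ μ is nonempty, the equation λ • μ = λ ∘ I_{K,L} ∘ μ holds. -/

import Mathlib

open Finset

def Exchangeable {A B : Type*} [DecidableEq A] [DecidableEq B]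
    (r : Finset A → Finset B → Prop) (X : Finset A) (Y : Finset B) :
    A ⊕ B → A ⊕ B → Prop
  | Sum.inl a, Sum.inl a' =>
      a = a' ∨
      (a ∈ X ∧ a' ∉ X ∧ r (insert a' (X.erase a)) Y) ∨
      (a ∉ X ∧ a' ∈ X ∧ r (insert a (X.erase a')) Y)
  | Sum.inl a, Sum.inr b =>
      (a ∈ X ∧ b ∈ Y ∧ r (X.erase a) (Y.erase b)) ∨
      (a ∉ X ∧ b ∉ Y ∧ r (insert a X) (insert b Y))
  | Sum.inr b, Sum.inl a =>
      (b ∈ Y ∧ a ∈ X ∧ r (X.erase a) (Y.erase b)) ∨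
      (b ∉ Y ∧ a ∉ X ∧ r (insert a X) (insert b Y))
  | Sum.inr b, Sum.inr b' =>
      b = b' ∨
      (b ∈ Y ∧ b' ∉ Y ∧ r X (insert b' (Y.erase b))) ∨
      (b ∉ Y ∧ b' ∈ Y ∧ r X (insert b (Y.erase b')))

def InBar {A B : Type*} (X : Finset A) (Y : Finset B) : A ⊕ B → Prop
  | Sum.inl a => a ∉ X
  | Sum.inr b => b ∈ Y

def ExchAxiom {A B : Type*} [DecidableEq A] [DecidableEq B]
    (r : Finset A → Finset B → Prop) : Prop :=
  ∀ X Y X' Y', r X Y → r X' Y' → ∀ u, InBar X Y u →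
    ∃ v, InBar X' Y' v ∧ Exchangeable r X Y u v

def RelComp {A B C : Type*} (r : Finset A → Finset B → Prop)
    (s : Finset B → Finset C → Prop) : Finset A → Finset C → Prop :=
  fun X Z => ∃ Y, r X Y ∧ s Y Z

def BComp {A B C : Type*} [DecidableEq B] (r : Finset A → Finset B → Prop)
    (s : Finset B → Finset C → Prop) (k l : ℕ) : Finset A → Finset C → Prop :=
  fun X Z => ∃ Y Y', r X Y' ∧ s Y Z ∧ (Y \ Y').card = k ∧ (Y' \ Y).card = l

noncomputable def totalType {A B C : Type*} [DecidableEq B]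
    (r : Finset A → Finset B → Prop) (s : Finset B → Finset C → Prop) : ℕ :=
  sInf {m | ∃ k l, k + l = m ∧ ∃ X Z, BComp r s k l X Z}

noncomputable def LaxComp {A B C : Type*} [DecidableEq B]
    (r : Finset A → Finset B → Prop) (s : Finset B → Finset C → Prop) :
    Finset A → Finset C → Prop :=
  fun X Z => ∃ k l, k + l = totalType r s ∧ BComp r s k l X Z

def PartialId {B : Type*} [DecidableEq B] (K L : Finset B) :
    Finset B → Finset B → Prop :=
  fun X Y => Y \ X = K ∧ X \ Y = L

namespace LaxAux

open Set

variable {γ : Type*}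

/-- symmetric difference of sets -/
def sd (V W : Set γ) : Set γ := (V \ W) ∪ (W \ V)

lemma sd_comm (V W : Set γ) : sd V W = sd W V := by
  simp [sd, union_comm]

lemma not_mem_sd {V W : Set γ} {x : γ} (h : x ∉ sd V W) : x ∈ V ↔ x ∈ W := by
  simp only [sd, mem_union, mem_diff, not_or, not_and, not_not] at h
  exact ⟨fun hx => h.1 hx, fun hx => h.2 hx⟩

theorem strong_exchange (𝓦 : Set (Set γ))
    (hex : Matroid.ExchangeProperty (· ∈ 𝓦))
    {V₁ V₂ : Set γ} (h1 : V₁ ∈ 𝓦) (h2 : V₂ ∈ 𝓦) (hfin : (sd V₁ V₂).Finite)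
    {e : γ} (he : e ∈ V₁ \ V₂) :
    ∃ f ∈ V₂ \ V₁, insert f (V₁ \ {e}) ∈ 𝓦 ∧ insert e (V₂ \ {f}) ∈ 𝓦 := by
  classical
  set D := sd V₁ V₂ with hD
  have hV1D : V₁ = (V₁ \ D) ∪ (V₁ ∩ D) := by
    ext x; by_cases hx : x ∈ D <;> simp [hx] <;> tauto
  have hV2D : V₂ = (V₁ \ D) ∪ (V₂ ∩ D) := by
    ext x; by_cases hx : x ∈ D
    · simp [hx]
    · have := not_mem_sd (V := V₁) (W := V₂) hx
      simp [hx]; tauto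
  -- the slice matroid
  let Base : Set γ → Prop := fun T => T ⊆ D ∧ (V₁ \ D) ∪ T ∈ 𝓦
  have hBaseslice : ∀ T, Base T → ((V₁ \ D) ∪ T) \ D = V₁ \ D ∧ ((V₁ \ D) ∪ T) ∩ D = T := by
    intro T hT
    constructor
    · ext x; simp only [mem_diff, mem_union]
      constructor
      · rintro ⟨h | h, hxD⟩
        · exact ⟨h.1, hxD⟩
        · exact absurd (hT.1 h) hxD
      · rintro ⟨hx, hxD⟩; exact ⟨Or.inl ⟨hx, hxD⟩, hxD⟩
    · ext x; simp only [mem_inter_iff, mem_union]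
      constructor
      · rintro ⟨h | h, hxD⟩
        · exact absurd hxD h.2
        · exact h
      · intro hx; exact ⟨Or.inr hx, hT.1 hx⟩
  have hexch : Matroid.ExchangeProperty Base := by
    rintro T T' ⟨hTD, hTW⟩ ⟨hT'D, hT'W⟩ a ha
    have haD : a ∈ D := hTD ha.1
    have haV : a ∈ ((V₁ \ D) ∪ T) \ ((V₁ \ D) ∪ T') := by
      simp only [mem_diff, mem_union]
      exact ⟨Or.inr ha.1, by rintro (h | h); exact h.2 haD; exact ha.2 h⟩
    obtain ⟨b, hb, hbW⟩ := hex _ _ hTW hT'W a haV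
    have hbT' : b ∈ T' \ T := by
      rcases (mem_union _ _ _).1 hb.1 with h | h
      · exact absurd (Or.inl h) hb.2
      · exact ⟨h, fun hc => hb.2 (Or.inr hc)⟩
    refine ⟨b, hbT', ?_, ?_⟩
    · exact insert_subset (hT'D hbT'.1) (diff_subset.trans hTD)
    · have : insert b (((V₁ \ D) ∪ T) \ {a}) = (V₁ \ D) ∪ insert b (T \ {a}) := by
        ext x
        simp only [mem_insert_iff, mem_diff, mem_union, mem_singleton_iff]
        constructor
        · rintro (rfl | ⟨h | h, hxa⟩)
          · exact Or.inr (Or.inl rfl)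
          · exact Or.inl h
          · exact Or.inr (Or.inr ⟨h, hxa⟩)
        · rintro (h | rfl | ⟨h, hxa⟩)
          · exact Or.inr ⟨Or.inl h, fun hxe => h.2 (hxe ▸ haD)⟩
          · exact Or.inl rfl
          · exact Or.inr ⟨Or.inr h, hxa⟩
      rwa [this] at hbW
  have hDfin : D.Finite := hfin
  let M : Matroid γ := by
    refine ⟨D, Base, fun I => ∃ T, Base T ∧ I ⊆ T, fun I => Iff.rfl,
      ⟨V₁ ∩ D, inter_subset_right, by rw [← hV1D]; exact h1⟩, hexch, ?_, fun T hT => hT.1⟩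
    intro X hX I hI hIX
    have hfam : {J | (∃ T, Base T ∧ J ⊆ T) ∧ I ⊆ J ∧ J ⊆ X}.Finite := by
      apply (hDfin.finite_subsets).subset
      intro J hJ
      exact hJ.2.2.trans hX
    obtain ⟨J, hJ, hJmax⟩ := Set.Finite.exists_maximalFor id _ hfam ⟨I, hI, Subset.rfl, hIX⟩
    exact ⟨J, hJ.2.1, ⟨hJ.1, hJ.2.2⟩, fun K hK hJK => hJmax ⟨hK.1, hJ.2.1.trans hJK, hK.2⟩ hJK⟩
  have hME : M.E = D := rfl
  have hMBase : ∀ T, M.IsBase T ↔ Base T := fun T => Iff.rfl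
  -- bases B₁' B₂'
  have hB1 : M.IsBase (V₁ ∩ D) := ⟨inter_subset_right, by rw [← hV1D]; exact h1⟩
  have hB2 : M.IsBase (V₂ ∩ D) := ⟨inter_subset_right, by rw [← hV2D]; exact h2⟩
  set B₁ := V₁ ∩ D with hB₁def
  set B₂ := V₂ ∩ D with hB₂def
  have heD : e ∈ D := Or.inl he
  have heB₁ : e ∈ B₁ := ⟨he.1, heD⟩
  have heB₂ : e ∉ B₂ := fun h => he.2 h.1
  -- minimal S ⊆ B₂ with e ∈ closure S
  have hSnon : B₂ ∈ {S | S ⊆ B₂ ∧ e ∈ M.closure S} :=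
    ⟨Subset.rfl, by rw [hB2.closure_eq]; exact heD⟩
  have hSfin : {S | S ⊆ B₂ ∧ e ∈ M.closure S}.Finite :=
    ((hDfin.subset (inter_subset_right)).finite_subsets).subset (fun S hS => hS.1)
  obtain ⟨S, hS, hSmin⟩ := Set.Finite.exists_minimalFor id _ hSfin ⟨B₂, hSnon⟩
  have hSemin : ∀ f ∈ S, e ∉ M.closure (S \ {f}) := by
    intro f hf hecl
    have : S \ {f} = S := by
      exact Subset.antisymm diff_subset (hSmin ⟨diff_subset.trans hS.1, hecl⟩ diff_subset)
    exact (this ▸ (fun (h : f ∈ S \ {f}) => h.2 rfl)) (this ▸ hf)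
  -- every f in S gives a base of the second kind
  have claim1 : ∀ f ∈ S, M.IsBase (insert e (B₂ \ {f})) := by
    intro f hf
    have hfB₂ : f ∈ B₂ := hS.1 hf
    have hB2i : M.Indep B₂ := hB2.indep
    have hB2fi : M.Indep (B₂ \ {f}) := hB2i.subset diff_subset
    have heB2f : e ∉ B₂ \ {f} := fun h => heB₂ h.1
    have hindep : M.Indep (insert e (B₂ \ {f})) := by
      rw [hB2fi.insert_indep_iff_of_notMem heB2f]
      refine ⟨heD, fun hecl => ?_⟩
      -- closure exchange trick
      have h1' : e ∈ M.closure (insert f (S \ {f})) \ M.closure (S \ {f}) := by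
        rw [insert_diff_singleton, insert_eq_of_mem hf]
        exact ⟨hS.2, hSemin f hf⟩
      have h2' := Matroid.closure_exchange h1'
      have h3' : M.closure (insert e (S \ {f})) ⊆ M.closure (B₂ \ {f}) := by
        rw [← Matroid.closure_insert_eq_of_mem_closure hecl]
        exact M.closure_subset_closure (insert_subset_insert (diff_subset_diff_left hS.1))
      exact hB2i.notMem_closure_diff_of_mem hfB₂ (h3' h2'.1)
    exact hB2.exchange_isBase_of_indep heB₂ hindep
  -- some f in S gives a base of the first kind
  have claim2 : ∃ f ∈ S, M.IsBase (insert f (B₁ \ {e})) ∧ f ∉ B₁ := by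
    by_contra hcon
    push_neg at hcon
    have hB1i : M.Indep B₁ := hB1.indep
    have hB1ei : M.Indep (B₁ \ {e}) := hB1i.subset diff_subset
    have hsub : S ⊆ M.closure (B₁ \ {e}) := by
      intro f hf
      by_cases hfB₁ : f ∈ B₁ \ {e}
      · exact M.subset_closure (B₁ \ {e}) (diff_subset.trans hB1.subset_ground) hfB₁
      · by_cases hfcl : f ∈ M.closure (B₁ \ {e})
        · exact hfcl
        · exfalso
          have hfB : f ∉ B₁ := by
            intro hfB
            exact hfcl (M.subset_closure (B₁ \ {e})
              (diff_subset.trans hB1.subset_ground)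
              ⟨hfB, fun hfe => heB₂ ((hfe : f = e) ▸ hS.1 hf)⟩)
          have hindep : M.Indep (insert f (B₁ \ {e})) := by
            rw [hB1ei.insert_indep_iff_of_notMem (fun h => hfB h.1)]
            exact ⟨(hS.1.trans inter_subset_right) hf, hfcl⟩
          exact hfB (hcon f hf (hB1.exchange_isBase_of_indep hfB hindep))
    have : e ∈ M.closure (B₁ \ {e}) := by
      have := M.closure_subset_closure_of_subset_closure hsub
      exact this hS.2
    exact hB1.indep.notMem_closure_diff_of_mem heB₁ this
  obtain ⟨f, hfS, hfbase, hfB₁⟩ := claim2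
  have hfB₂ : f ∈ B₂ := hS.1 hfS
  have hfV₂ : f ∈ V₂ := hfB₂.1
  have hfV₁ : f ∉ V₁ := fun h => hfB₁ ⟨h, hfB₂.2⟩
  refine ⟨f, ⟨hfV₂, hfV₁⟩, ?_, ?_⟩
  · -- insert f (V₁ \ {e}) ∈ 𝓦
    have hBb : Base (insert f (B₁ \ {e})) := hfbase
    have : (V₁ \ D) ∪ insert f (B₁ \ {e}) = insert f (V₁ \ {e}) := by
      ext x
      simp only [mem_union, mem_insert_iff, mem_diff, mem_singleton_iff, hB₁def, mem_inter_iff]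
      constructor
      · rintro (h | rfl | ⟨⟨h, _⟩, hxe⟩)
        · exact Or.inr ⟨h.1, fun hxe => h.2 (hxe ▸ heD)⟩
        · exact Or.inl rfl
        · exact Or.inr ⟨h, hxe⟩
      · rintro (rfl | ⟨h, hxe⟩)
        · exact Or.inr (Or.inl rfl)
        · by_cases hxD : x ∈ D
          · exact Or.inr (Or.inr ⟨⟨h, hxD⟩, hxe⟩)
          · exact Or.inl ⟨h, hxD⟩
    rw [← this]
    exact hBb.2
  · -- insert e (V₂ \ {f}) ∈ 𝓦
    have hBb : Base (insert e (B₂ \ {f})) := claim1 f hfS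
    have hV2D' : V₂ \ D = V₁ \ D := by
      ext x
      simp only [mem_diff]
      constructor
      · rintro ⟨hx, hxD⟩; exact ⟨((not_mem_sd hxD).2 hx), hxD⟩
      · rintro ⟨hx, hxD⟩; exact ⟨((not_mem_sd hxD).1 hx), hxD⟩
    have : (V₁ \ D) ∪ insert e (B₂ \ {f}) = insert e (V₂ \ {f}) := by
      rw [← hV2D']
      ext x
      simp only [mem_union, mem_insert_iff, mem_diff, mem_singleton_iff, hB₂def, mem_inter_iff]
      constructor
      · rintro (h | rfl | ⟨⟨h, _⟩, hxf⟩)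
        · exact Or.inr ⟨h.1, fun hxf => h.2 (hxf ▸ (hfB₂.2 : f ∈ D))⟩
        · exact Or.inl rfl
        · exact Or.inr ⟨h, hxf⟩
      · rintro (rfl | ⟨h, hxf⟩)
        · exact Or.inr (Or.inl rfl)
        · by_cases hxD : x ∈ D
          · exact Or.inr (Or.inr ⟨⟨h, hxD⟩, hxf⟩)
          · exact Or.inl ⟨h, hxD⟩
    rw [← this]
    exact hBb.2



def Bad (φ : γ → γ) (V : Set γ) : Set γ := {x | φ x ≠ x ∧ (x ∈ V ↔ φ x ∈ V)}
def KBad (φ : γ → γ) (V : Set γ) : Set γ := {x | φ x ≠ x ∧ x ∉ V ∧ φ x ∉ V}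
def LBad (φ : γ → γ) (V : Set γ) : Set γ := {x | φ x ≠ x ∧ x ∈ V ∧ φ x ∈ V}

section Upd

variable {φ : γ → γ} {V : Set γ} {e f : γ}

lemma phi_inj (invol : ∀ x, φ (φ x) = x) (h : φ e = φ f) : e = f := by
  rw [← invol e, h, invol]

lemma LBad_eq (V : Set γ) : LBad φ V = Bad φ V \ KBad φ V := by
  ext x
  simp only [LBad, Bad, KBad, mem_setOf_eq, mem_diff]
  tauto

lemma bad_compl (V : Set γ) : Bad φ Vᶜ = Bad φ V := by
  ext x; simp only [Bad, mem_setOf_eq, mem_compl_iff]; tauto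

lemma kbad_compl (V : Set γ) : KBad φ Vᶜ = LBad φ V := by
  ext x; simp only [KBad, LBad, mem_setOf_eq, mem_compl_iff]; tauto

lemma lbad_compl (V : Set γ) : LBad φ Vᶜ = KBad φ V := by
  ext x; simp only [KBad, LBad, mem_setOf_eq, mem_compl_iff]

lemma sd_compl (V W : Set γ) : sd Vᶜ Wᶜ = sd V W := by
  ext x; simp only [sd, mem_union, mem_diff, mem_compl_iff]; tauto

-- membership in modified sets is unchanged away from the action
lemma pairmem_unpaired (invol : ∀ x, φ (φ x) = x) (hf : φ f = f) {x : γ} (hx : φ x ≠ x) :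
    x ≠ f ∧ φ x ≠ f := by
  constructor
  · rintro rfl; exact hx hf
  · intro h
    have hxf : x = f := by rw [← invol x, h, hf]
    exact hx (by rw [h, hxf])

lemma bad_insert_unpaired (invol : ∀ x, φ (φ x) = x) (hf : φ f = f) : Bad φ (insert f V) = Bad φ V := by
  ext x
  by_cases hx : φ x = x
  · simp [Bad, hx]
  · obtain ⟨h1, h2⟩ := pairmem_unpaired invol hf hx
    simp only [Bad, mem_setOf_eq, mem_insert_iff, h1, h2, false_or]

lemma bad_diff_unpaired (invol : ∀ x, φ (φ x) = x) (he : φ e = e) : Bad φ (V \ {e}) = Bad φ V := by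
  ext x
  by_cases hx : φ x = x
  · simp [Bad, hx]
  · obtain ⟨h1, h2⟩ := pairmem_unpaired invol he hx
    simp only [Bad, mem_setOf_eq, mem_diff, mem_singleton_iff, h1, h2]
    tauto

lemma kbad_insert_unpaired (invol : ∀ x, φ (φ x) = x) (hf : φ f = f) : KBad φ (insert f V) = KBad φ V := by
  ext x
  by_cases hx : φ x = x
  · simp [KBad, hx]
  · obtain ⟨h1, h2⟩ := pairmem_unpaired invol hf hx
    simp only [KBad, mem_setOf_eq, mem_insert_iff, h1, h2, false_or]

lemma kbad_diff_unpaired (invol : ∀ x, φ (φ x) = x) (he : φ e = e) : KBad φ (V \ {e}) = KBad φ V := by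
  ext x
  by_cases hx : φ x = x
  · simp [KBad, hx]
  · obtain ⟨h1, h2⟩ := pairmem_unpaired invol he hx
    simp only [KBad, mem_setOf_eq, mem_diff, mem_singleton_iff, h1, h2]
    tauto

lemma bad_diff_pairL (invol : ∀ x, φ (φ x) = x) (hp : φ e ≠ e) (he : e ∈ V) (hpe : φ e ∈ V) :
    Bad φ (V \ {e}) = Bad φ V \ {e, φ e} := by
  ext x
  by_cases hx1 : x = e
  · rw [hx1]
    have h3 : e ≠ φ e := Ne.symm hp
    simp only [Bad, mem_setOf_eq, mem_diff, mem_singleton_iff, mem_insert_iff]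
    tauto
  by_cases hx2 : x = φ e
  · rw [hx2]
    have h3 : e ≠ φ e := Ne.symm hp
    simp only [Bad, mem_setOf_eq, mem_diff, mem_singleton_iff, mem_insert_iff, invol]
    tauto
  · have h1 : φ x ≠ e := fun h => hx2 (by rw [← h, invol])
    have h2 : φ x ≠ φ e := fun h => hx1 (phi_inj invol h)
    simp only [Bad, mem_setOf_eq, mem_diff, mem_singleton_iff, mem_insert_iff, hx1, hx2, h1, h2]
    tauto

lemma kbad_diff_pairL (invol : ∀ x, φ (φ x) = x) (hp : φ e ≠ e) (he : e ∈ V) (hpe : φ e ∈ V) :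
    KBad φ (V \ {e}) = KBad φ V := by
  ext x
  by_cases hx1 : x = e
  · rw [hx1]
    have h3 : e ≠ φ e := Ne.symm hp
    simp only [KBad, mem_setOf_eq, mem_diff, mem_singleton_iff]
    tauto
  by_cases hx2 : x = φ e
  · rw [hx2]
    have h3 : e ≠ φ e := Ne.symm hp
    simp only [KBad, mem_setOf_eq, mem_diff, mem_singleton_iff, invol]
    tauto
  · have h1 : φ x ≠ e := fun h => hx2 (by rw [← h, invol])
    simp only [KBad, mem_setOf_eq, mem_diff, mem_singleton_iff, hx1, h1]
    tauto

lemma bad_insert_pairGood (invol : ∀ x, φ (φ x) = x) (hp : φ f ≠ f) (hf : f ∉ V)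
    (hpf : φ f ∈ V) : Bad φ (insert f V) = Bad φ V ∪ {f, φ f} := by
  ext x
  by_cases hx1 : x = f
  · rw [hx1]
    have h3 : f ≠ φ f := Ne.symm hp
    simp only [Bad, mem_setOf_eq, mem_insert_iff, mem_union, mem_singleton_iff]
    tauto
  by_cases hx2 : x = φ f
  · rw [hx2]
    have h3 : f ≠ φ f := Ne.symm hp
    simp only [Bad, mem_setOf_eq, mem_insert_iff, mem_union, mem_singleton_iff, invol]
    tauto
  · have h1 : φ x ≠ f := fun h => hx2 (by rw [← h, invol])
    have h2 : φ x ≠ φ f := fun h => hx1 (phi_inj invol h)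
    simp only [Bad, mem_setOf_eq, mem_insert_iff, mem_union, mem_singleton_iff, hx1, hx2, h1, h2]
    tauto

lemma kbad_insert_pairGood (invol : ∀ x, φ (φ x) = x) (hp : φ f ≠ f) (hf : f ∉ V)
    (hpf : φ f ∈ V) : KBad φ (insert f V) = KBad φ V := by
  ext x
  by_cases hx1 : x = f
  · rw [hx1]
    simp only [KBad, mem_setOf_eq, mem_insert_iff]
    tauto
  by_cases hx2 : x = φ f
  · rw [hx2]
    simp only [KBad, mem_setOf_eq, mem_insert_iff, invol]
    tauto
  · have h1 : φ x ≠ f := fun h => hx2 (by rw [← h, invol])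
    simp only [KBad, mem_setOf_eq, mem_insert_iff, hx1, h1]
    tauto

lemma bad_insert_pairK (invol : ∀ x, φ (φ x) = x) (hp : φ f ≠ f) (hf : f ∉ V)
    (hpf : φ f ∉ V) : Bad φ (insert f V) = Bad φ V \ {f, φ f} := by
  ext x
  by_cases hx1 : x = f
  · rw [hx1]
    have h3 : f ≠ φ f := Ne.symm hp
    simp only [Bad, mem_setOf_eq, mem_insert_iff, mem_diff, mem_singleton_iff]
    tauto
  by_cases hx2 : x = φ f
  · rw [hx2]
    have h3 : f ≠ φ f := Ne.symm hp
    simp only [Bad, mem_setOf_eq, mem_insert_iff, mem_diff, mem_singleton_iff, invol]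
    tauto
  · have h1 : φ x ≠ f := fun h => hx2 (by rw [← h, invol])
    have h2 : φ x ≠ φ f := fun h => hx1 (phi_inj invol h)
    simp only [Bad, mem_setOf_eq, mem_insert_iff, mem_diff, mem_singleton_iff, hx1, hx2, h1, h2]
    tauto

lemma kbad_insert_pairK (invol : ∀ x, φ (φ x) = x) (hp : φ f ≠ f) (hf : f ∉ V)
    (hpf : φ f ∉ V) : KBad φ (insert f V) = KBad φ V \ {f, φ f} := by
  ext x
  by_cases hx1 : x = f
  · rw [hx1]
    have h3 : f ≠ φ f := Ne.symm hp
    simp only [KBad, mem_setOf_eq, mem_insert_iff, mem_diff, mem_singleton_iff]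
    tauto
  by_cases hx2 : x = φ f
  · rw [hx2]
    have h3 : f ≠ φ f := Ne.symm hp
    simp only [KBad, mem_setOf_eq, mem_insert_iff, mem_diff, mem_singleton_iff, invol]
    tauto
  · have h1 : φ x ≠ f := fun h => hx2 (by rw [← h, invol])
    have h2 : φ x ≠ φ f := fun h => hx1 (phi_inj invol h)
    simp only [KBad, mem_setOf_eq, mem_insert_iff, mem_diff, mem_singleton_iff, hx1, hx2, h1, h2]
    tauto

end Upd

lemma ncard_union_pair {S : Set γ} (h : S.Finite) {x y : γ} (hx : x ∉ S) (hy : y ∉ S)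
    (hxy : x ≠ y) : (S ∪ {x, y}).ncard = S.ncard + 2 := by
  have he : S ∪ {x, y} = insert x (insert y S) := by
    ext z
    simp only [mem_union, mem_insert_iff, mem_singleton_iff]
    tauto
  rw [he, Set.ncard_insert_of_notMem (by simp [hx, hxy]) (h.insert y),
    Set.ncard_insert_of_notMem hy h]

lemma ncard_eq_diff_pair_add_two {S : Set γ} (h : S.Finite) {x y : γ} (hx : x ∈ S) (hy : y ∈ S)
    (hxy : x ≠ y) : S.ncard = (S \ {x, y}).ncard + 2 := by
  have he : S = (S \ {x, y}) ∪ {x, y} := by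
    ext z
    simp only [mem_union, mem_diff, mem_insert_iff, mem_singleton_iff]
    constructor
    · intro hz; by_cases h1 : z = x; · tauto
      by_cases h2 : z = y <;> tauto
    · rintro (h | rfl | rfl) <;> tauto
  conv_lhs => rw [he]
  rw [ncard_union_pair h.diff (by simp) (by simp) hxy]

lemma sd_update {W U : Set γ} {e f : γ} (heW : e ∈ W) (heU : e ∉ U) (hfU : f ∈ U) (hfW : f ∉ W) :
    sd (insert f (W \ {e})) U = sd W U \ {e, f} := by
  have hef : e ≠ f := fun h => heU (h ▸ hfU)
  ext x
  by_cases h1 : x = e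
  · subst h1; simp [sd, heU, heW, hef]
  by_cases h2 : x = f
  · subst h2; simp [sd, hfU, hfW]
  · simp only [sd, mem_union, mem_diff, mem_insert_iff, mem_singleton_iff, h1, h2]
    tauto

lemma mem_sd_left {W U : Set γ} {e : γ} (h1 : e ∈ W) (h2 : e ∉ U) : e ∈ sd W U := Or.inl ⟨h1, h2⟩
lemma mem_sd_right {W U : Set γ} {e : γ} (h1 : e ∈ U) (h2 : e ∉ W) : e ∈ sd W U := Or.inr ⟨h1, h2⟩

lemma union_pair_diff_pair {A : Set γ} {x y : γ} (hx : x ∉ A) (hy : y ∉ A) :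
    (A ∪ {x, y}) \ {x, y} = A := by
  ext z
  simp only [mem_diff, mem_union, mem_insert_iff, mem_singleton_iff]
  constructor
  · rintro ⟨h | h, h2⟩
    · exact h
    · exact absurd h h2
  · intro hz
    exact ⟨Or.inl hz, by rintro (rfl | rfl); exact hx hz; exact hy hz⟩

section Chain

variable {𝓦 : Set (Set γ)} {φ : γ → γ} {m : ℕ}

theorem chain
    (invol : ∀ x, φ (φ x) = x)
    (sep : ∀ V₁ ∈ 𝓦, ∀ V₂ ∈ 𝓦, ∀ e ∈ V₁ \ V₂, ∃ f ∈ V₂ \ V₁,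
        insert f (V₁ \ {e}) ∈ 𝓦 ∧ insert e (V₂ \ {f}) ∈ 𝓦)
    (finsd : ∀ V₁ ∈ 𝓦, ∀ V₂ ∈ 𝓦, (sd V₁ V₂).Finite)
    (badFin : ∀ V ∈ 𝓦, (Bad φ V).Finite)
    (minBad : ∀ V ∈ 𝓦, 2 * m ≤ (Bad φ V).ncard)
    {V V₂ : Set γ} (hV : V ∈ 𝓦) (hV₂ : V₂ ∈ 𝓦)
    (hVmin : (Bad φ V).ncard = 2 * m) (hV₂min : (Bad φ V₂).ncard = 2 * m) :
    ∀ n (S : Set γ) (x : γ), S ∈ 𝓦 → (sd S V₂).ncard = n →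
      φ x ≠ x → x ∈ S → φ x ∈ S → x ∈ V → x ∉ V₂ → φ x ∈ V₂ → φ x ∉ V →
      Bad φ S = Bad φ V ∪ {x, φ x} →
      KBad φ S = KBad φ V →
      S \ V ⊆ V₂ → (V \ S) ∩ V₂ = ∅ →
      n < (sd V V₂).ncard →
      ((∃ Vg ∈ 𝓦, (Bad φ Vg).ncard = 2 * m ∧ KBad φ Vg = KBad φ V ∧
          LBad φ Vg = LBad φ V ∧ (sd Vg V₂).ncard < (sd V V₂).ncard) ∨
       (∃ V₂' ∈ 𝓦, (Bad φ V₂').ncard = 2 * m ∧ (∀ y, φ y = y → (y ∈ V₂' ↔ y ∈ V₂)) ∧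
          (sd V V₂').ncard < (sd V V₂).ncard)) := by
  intro n
  induction n using Nat.strong_induction_on with
  | _ n IH =>
  intro S x hS hn hpx hxS hpxS hxV hxV2 hpxV2 hpxV hBadS hKBadS hSV hVS hlt
  have hxnB : x ∉ Bad φ V := fun hb => hpxV (hb.2.mp hxV)
  have hpxnB : φ x ∉ Bad φ V := by
    intro hb
    have h2 := hb.2
    rw [invol] at h2
    exact hpxV (h2.mpr hxV)
  obtain ⟨h, ⟨hhV₂, hhS⟩, hS', hV₂'⟩ := sep S hS V₂ hV₂ x ⟨hxS, hxV2⟩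
  have hhx : h ≠ x := fun e => hxV2 (e ▸ hhV₂)
  have hhpx : h ≠ φ x := fun e => hhS (e ▸ hpxS)
  have hhV : h ∉ V := by
    intro hhVmem
    have hmem : h ∈ (V \ S) ∩ V₂ := ⟨⟨hhVmem, hhS⟩, hhV₂⟩
    rw [hVS] at hmem
    exact hmem
  have hBadSx : Bad φ (S \ {x}) = Bad φ V := by
    rw [bad_diff_pairL invol hpx hxS hpxS, hBadS, union_pair_diff_pair hxnB hpxnB]
  have hKBadSx : KBad φ (S \ {x}) = KBad φ V := by
    rw [kbad_diff_pairL invol hpx hxS hpxS, hKBadS]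
  have hsdS' : sd (insert h (S \ {x})) V₂ = sd S V₂ \ {x, h} := sd_update hxS hxV2 hhV₂ hhS
  have hfinS : (sd S V₂).Finite := finsd S hS V₂ hV₂
  have hxsd : x ∈ sd S V₂ := mem_sd_left hxS hxV2
  have hhsd : h ∈ sd S V₂ := mem_sd_right hhV₂ hhS
  have hns : n = (sd (insert h (S \ {x})) V₂).ncard + 2 := by
    rw [hsdS', ← hn]
    exact ncard_eq_diff_pair_add_two hfinS hxsd hhsd (Ne.symm hhx)
  by_cases hph : φ h = h
  · -- f unpaired : new good V
    left
    have hBadS' : Bad φ (insert h (S \ {x})) = Bad φ V := by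
      rw [bad_insert_unpaired invol hph, hBadSx]
    have hKBadS' : KBad φ (insert h (S \ {x})) = KBad φ V := by
      rw [kbad_insert_unpaired invol hph, hKBadSx]
    refine ⟨insert h (S \ {x}), hS', by rw [hBadS', hVmin], hKBadS', ?_, by omega⟩
    rw [LBad_eq, LBad_eq, hBadS', hKBadS']
  · by_cases hphS : φ h ∈ S
    · have hphx : φ h ≠ x := fun e => hhS (by rw [← invol h, e]; exact hpxS)
      have hphSx : φ h ∈ S \ {x} := ⟨hphS, hphx⟩
      have hhSx : h ∉ S \ {x} := fun hc => hhS hc.1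
      have hBadS' : Bad φ (insert h (S \ {x})) = Bad φ V ∪ {h, φ h} := by
        rw [bad_insert_pairGood invol hph hhSx hphSx, hBadSx]
      have hKBadS' : KBad φ (insert h (S \ {x})) = KBad φ V := by
        rw [kbad_insert_pairGood invol hph hhSx hphSx, hKBadSx]
      by_cases hphV₂ : φ h ∈ V₂
      · -- exit to the right : modify V₂
        right
        have hpxh : φ x ≠ h := fun e => hxV2 (by rw [← invol x, e]; exact hphV₂)
        have hxV₂h : x ∉ V₂ \ {h} := fun hc => hxV2 hc.1
        have hpxV₂h : φ x ∈ V₂ \ {h} := ⟨hpxV2, hpxh⟩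
        have hBadV₂' : Bad φ (insert x (V₂ \ {h})) = (Bad φ V₂ \ {h, φ h}) ∪ {x, φ x} := by
          rw [bad_insert_pairGood invol hpx hxV₂h hpxV₂h, bad_diff_pairL invol hph hhV₂ hphV₂]
        have hhB : h ∈ Bad φ V₂ := ⟨hph, iff_of_true hhV₂ hphV₂⟩
        have hphB : φ h ∈ Bad φ V₂ :=
          ⟨by rw [invol]; exact Ne.symm hph, by rw [invol]; exact iff_of_true hphV₂ hhV₂⟩
        have hc1 : (Bad φ V₂).ncard = (Bad φ V₂ \ {h, φ h}).ncard + 2 :=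
          ncard_eq_diff_pair_add_two (badFin V₂ hV₂) hhB hphB (fun e => hph e.symm)
        have hxnB₂ : x ∉ Bad φ V₂ := fun hb => hxV2 (hb.2.mpr hpxV2)
        have hpxnB₂ : φ x ∉ Bad φ V₂ := by
          intro hb
          have h2 := hb.2
          rw [invol] at h2
          exact hxV2 (h2.mp hpxV2)
        have hc2 : ((Bad φ V₂ \ {h, φ h}) ∪ {x, φ x}).ncard
            = (Bad φ V₂ \ {h, φ h}).ncard + 2 :=
          ncard_union_pair (badFin V₂ hV₂).diff (fun hc => hxnB₂ hc.1)
            (fun hc => hpxnB₂ hc.1) (Ne.symm hpx)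
        refine ⟨insert x (V₂ \ {h}), hV₂', ?_, ?_, ?_⟩
        · rw [hBadV₂', hc2]; omega
        · intro y hy
          have hyx : y ≠ x := fun e => hpx (e ▸ hy)
          have hyh : y ≠ h := fun e => hph (e ▸ hy)
          simp [Set.mem_insert_iff, hyx, hyh]
        · have hsd2 : sd (insert x (V₂ \ {h})) V = sd V₂ V \ {h, x} :=
            sd_update hhV₂ hhV hxV hxV2
          have hfinV : (sd V V₂).Finite := finsd V hV V₂ hV₂
          have hhsdV : h ∈ sd V V₂ := mem_sd_right hhV₂ hhV
          have hxsdV : x ∈ sd V V₂ := mem_sd_left hxV hxV2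
          have heq : (sd V V₂).ncard = (sd V V₂ \ {h, x}).ncard + 2 := by
            rw [Set.pair_comm h x]
            exact ncard_eq_diff_pair_add_two hfinV hxsdV hhsdV (Ne.symm hhx)
          rw [sd_comm V (insert x (V₂ \ {h})), hsd2, sd_comm V₂ V]
          omega
      · -- continue the chain
        have hphV : φ h ∈ V := by
          by_contra hc
          exact hphV₂ (hSV ⟨hphS, hc⟩)
        have hres := IH ((sd (insert h (S \ {x})) V₂).ncard) (by omega)
          (insert h (S \ {x})) (φ h) hS' rfl
          (by rw [invol]; exact Ne.symm hph)
          (Set.mem_insert_of_mem _ hphSx)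
          (by rw [invol]; exact Set.mem_insert _ _)
          hphV hphV₂
          (by rw [invol]; exact hhV₂)
          (by rw [invol]; exact hhV)
          (by rw [invol, hBadS', Set.pair_comm])
          hKBadS'
          ?_ ?_ (by omega)
        · exact hres
        · -- (insert h (S \ {x})) \ V ⊆ V₂
          rintro z ⟨hz1, hz2⟩
          rcases Set.mem_insert_iff.mp hz1 with rfl | hz3
          · exact hhV₂
          · exact hSV ⟨hz3.1, hz2⟩
        · -- (V \ insert h (S \ {x})) ∩ V₂ = ∅
          apply Set.eq_empty_iff_forall_notMem.mpr
          rintro z ⟨⟨hzV, hzS'⟩, hzV₂⟩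
          by_cases hzx : z = x
          · exact hxV2 (hzx ▸ hzV₂)
          · apply hzS'
            have hzS : z ∈ S := by
              by_contra hzS
              have hmem : z ∈ (V \ S) ∩ V₂ := ⟨⟨hzV, hzS⟩, hzV₂⟩
              rw [hVS] at hmem
              exact hmem
            exact Set.mem_insert_of_mem _ ⟨hzS, hzx⟩
    · -- impossible : Bad too small
      exfalso
      have hphx : φ h ≠ x := fun e => hhS (by rw [← invol h, e]; exact hpxS)
      have hphpx : φ h ≠ φ x := fun e => hhx (phi_inj invol e)
      have hphSx : φ h ∉ S \ {x} := fun hc => hphS hc.1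
      have hhSx : h ∉ S \ {x} := fun hc => hhS hc.1
      have hBadS' : Bad φ (insert h (S \ {x})) = Bad φ V \ {h, φ h} := by
        rw [bad_insert_pairK invol hph hhSx hphSx, hBadSx]
      have hhBS : h ∈ Bad φ S := ⟨hph, iff_of_false hhS hphS⟩
      have hphBS : φ h ∈ Bad φ S :=
        ⟨by rw [invol]; exact Ne.symm hph, by rw [invol]; exact iff_of_false hphS hhS⟩
      have hhBV : h ∈ Bad φ V := by
        rw [hBadS] at hhBS
        rcases hhBS with hB | hp
        · exact hB
        · rcases hp with e | e
          · exact absurd e hhx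
          · exact absurd e hhpx
      have hphBV : φ h ∈ Bad φ V := by
        rw [hBadS] at hphBS
        rcases hphBS with hB | hp
        · exact hB
        · rcases hp with e | e
          · exact absurd e hphx
          · exact absurd e hphpx
      have hmin := minBad (insert h (S \ {x})) hS'
      rw [hBadS'] at hmin
      have hcount : (Bad φ V).ncard = (Bad φ V \ {h, φ h}).ncard + 2 :=
        ncard_eq_diff_pair_add_two (badFin V hV) hhBV hphBV (fun e => hph e.symm)
      omega

theorem step
    (invol : ∀ x, φ (φ x) = x)
    (sep : ∀ V₁ ∈ 𝓦, ∀ V₂ ∈ 𝓦, ∀ e ∈ V₁ \ V₂, ∃ f ∈ V₂ \ V₁,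
        insert f (V₁ \ {e}) ∈ 𝓦 ∧ insert e (V₂ \ {f}) ∈ 𝓦)
    (finsd : ∀ V₁ ∈ 𝓦, ∀ V₂ ∈ 𝓦, (sd V₁ V₂).Finite)
    (badFin : ∀ V ∈ 𝓦, (Bad φ V).Finite)
    (minBad : ∀ V ∈ 𝓦, 2 * m ≤ (Bad φ V).ncard)
    {V V₂ : Set γ} (hV : V ∈ 𝓦) (hV₂ : V₂ ∈ 𝓦)
    (hVmin : (Bad φ V).ncard = 2 * m) (hV₂min : (Bad φ V₂).ncard = 2 * m)
    {e : γ} (hpe : φ e = e) (heV : e ∈ V) (heV₂ : e ∉ V₂) :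
    ((∃ Vg ∈ 𝓦, (Bad φ Vg).ncard = 2 * m ∧ KBad φ Vg = KBad φ V ∧
        LBad φ Vg = LBad φ V ∧ (sd Vg V₂).ncard < (sd V V₂).ncard) ∨
     (∃ V₂' ∈ 𝓦, (Bad φ V₂').ncard = 2 * m ∧ (∀ y, φ y = y → (y ∈ V₂' ↔ y ∈ V₂)) ∧
        (sd V V₂').ncard < (sd V V₂).ncard)) := by
  obtain ⟨f, ⟨hfV₂, hfV⟩, hSW, hV₂fW⟩ := sep V hV V₂ hV₂ e ⟨heV, heV₂⟩
  have hef : e ≠ f := fun h => heV₂ (h ▸ hfV₂)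
  have hsdS₀ : sd (insert f (V \ {e})) V₂ = sd V V₂ \ {e, f} := sd_update heV heV₂ hfV₂ hfV
  have hfinV : (sd V V₂).Finite := finsd V hV V₂ hV₂
  have hesd : e ∈ sd V V₂ := mem_sd_left heV heV₂
  have hfsd : f ∈ sd V V₂ := mem_sd_right hfV₂ hfV
  have hNS : (sd V V₂).ncard = (sd (insert f (V \ {e})) V₂).ncard + 2 := by
    rw [hsdS₀]
    exact ncard_eq_diff_pair_add_two hfinV hesd hfsd hef
  by_cases hpf : φ f = f
  · left
    have hBadS₀ : Bad φ (insert f (V \ {e})) = Bad φ V := by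
      rw [bad_insert_unpaired invol hpf, bad_diff_unpaired invol hpe]
    have hKBadS₀ : KBad φ (insert f (V \ {e})) = KBad φ V := by
      rw [kbad_insert_unpaired invol hpf, kbad_diff_unpaired invol hpe]
    refine ⟨insert f (V \ {e}), hSW, by rw [hBadS₀, hVmin], hKBadS₀, ?_, by omega⟩
    rw [LBad_eq, LBad_eq, hBadS₀, hKBadS₀]
  · have hpfe : φ f ≠ e := by
      intro h
      have : f = e := by rw [← invol f, h, hpe]
      exact hef this.symm
    have hfVe : f ∉ V \ {e} := fun hc => hfV hc.1
    by_cases hpfV : φ f ∈ V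
    · have hpfVe : φ f ∈ V \ {e} := ⟨hpfV, hpfe⟩
      have hBadS₀ : Bad φ (insert f (V \ {e})) = Bad φ V ∪ {f, φ f} := by
        rw [bad_insert_pairGood invol hpf hfVe hpfVe, bad_diff_unpaired invol hpe]
      have hKBadS₀ : KBad φ (insert f (V \ {e})) = KBad φ V := by
        rw [kbad_insert_pairGood invol hpf hfVe hpfVe, kbad_diff_unpaired invol hpe]
      have hpfV₂ : φ f ∉ V₂ := by
        intro hpfV₂
        have hBad2 : Bad φ (insert e (V₂ \ {f})) = Bad φ V₂ \ {f, φ f} := by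
          rw [bad_insert_unpaired invol hpe, bad_diff_pairL invol hpf hfV₂ hpfV₂]
        have hfB : f ∈ Bad φ V₂ := ⟨hpf, iff_of_true hfV₂ hpfV₂⟩
        have hpfB : φ f ∈ Bad φ V₂ :=
          ⟨by rw [invol]; exact Ne.symm hpf, by rw [invol]; exact iff_of_true hpfV₂ hfV₂⟩
        have hmin2 := minBad _ hV₂fW
        rw [hBad2] at hmin2
        have := ncard_eq_diff_pair_add_two (badFin V₂ hV₂) hfB hpfB (fun h => hpf h.symm)
        omega
      apply chain invol sep finsd badFin minBad hV hV₂ hVmin hV₂min _ _ (φ f) hSW rfl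
        (by rw [invol]; exact Ne.symm hpf)
        (Set.mem_insert_of_mem _ hpfVe)
        (by rw [invol]; exact Set.mem_insert _ _)
        hpfV hpfV₂
        (by rw [invol]; exact hfV₂)
        (by rw [invol]; exact hfV)
        (by rw [invol, hBadS₀, Set.pair_comm])
        hKBadS₀
        ?_ ?_ (by omega)
      · rintro z ⟨hz1, hz2⟩
        rcases Set.mem_insert_iff.mp hz1 with rfl | hz3
        · exact hfV₂
        · exact absurd hz3.1 hz2
      · apply Set.eq_empty_iff_forall_notMem.mpr
        rintro z ⟨⟨hzV, hzS⟩, hzV₂⟩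
        apply hzS
        have hze : z ≠ e := fun hc => heV₂ (hc ▸ hzV₂)
        exact Set.mem_insert_of_mem _ ⟨hzV, hze⟩
    · exfalso
      have hpfVe : φ f ∉ V \ {e} := fun hc => hpfV hc.1
      have hBadS₀ : Bad φ (insert f (V \ {e})) = Bad φ V \ {f, φ f} := by
        rw [bad_insert_pairK invol hpf hfVe hpfVe, bad_diff_unpaired invol hpe]
      have hfB : f ∈ Bad φ V := ⟨hpf, iff_of_false hfV hpfV⟩
      have hpfB : φ f ∈ Bad φ V :=
        ⟨by rw [invol]; exact Ne.symm hpf, by rw [invol]; exact iff_of_false hpfV hfV⟩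
      have hmin2 := minBad _ hSW
      rw [hBadS₀] at hmin2
      have := ncard_eq_diff_pair_add_two (badFin V hV) hfB hpfB (fun h => hpf h.symm)
      omega

lemma compl_insert_diff {V : Set γ} {a b : γ} (hab : a ≠ b) :
    (insert a (V \ {b}))ᶜ = insert b (Vᶜ \ {a}) := by
  ext z
  by_cases h1 : z = a
  · subst h1
    simp [hab, Ne.symm hab]
  by_cases h2 : z = b
  · subst h2
    simp [Ne.symm hab, hab]
  · simp only [mem_compl_iff, mem_insert_iff, mem_diff, mem_singleton_iff, h1, h2]
    tauto

theorem transport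
    (invol : ∀ x, φ (φ x) = x)
    (sep : ∀ V₁ ∈ 𝓦, ∀ V₂ ∈ 𝓦, ∀ e ∈ V₁ \ V₂, ∃ f ∈ V₂ \ V₁,
        insert f (V₁ \ {e}) ∈ 𝓦 ∧ insert e (V₂ \ {f}) ∈ 𝓦)
    (finsd : ∀ V₁ ∈ 𝓦, ∀ V₂ ∈ 𝓦, (sd V₁ V₂).Finite)
    (badFin : ∀ V ∈ 𝓦, (Bad φ V).Finite)
    (minBad : ∀ V ∈ 𝓦, 2 * m ≤ (Bad φ V).ncard) :
    ∀ N (V V₂ : Set γ), V ∈ 𝓦 → V₂ ∈ 𝓦 → (Bad φ V).ncard = 2 * m →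
      (Bad φ V₂).ncard = 2 * m → (sd V V₂).ncard = N →
      ∃ Vf ∈ 𝓦, (Bad φ Vf).ncard = 2 * m ∧ KBad φ Vf = KBad φ V ∧ LBad φ Vf = LBad φ V ∧
        (∀ y, φ y = y → (y ∈ Vf ↔ y ∈ V₂)) := by
  -- complement world preliminaries
  have sep' : ∀ V₁ ∈ compl '' 𝓦, ∀ V₂ ∈ compl '' 𝓦, ∀ e ∈ V₁ \ V₂, ∃ f ∈ V₂ \ V₁,
      insert f (V₁ \ {e}) ∈ compl '' 𝓦 ∧ insert e (V₂ \ {f}) ∈ compl '' 𝓦 := by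
    rintro _ ⟨A, hA, rfl⟩ _ ⟨B, hB, rfl⟩ a ha
    have ha' : a ∈ B \ A := ⟨not_not.mp ha.2, ha.1⟩
    obtain ⟨b, hb, h1, h2⟩ := sep B hB A hA a ha'
    have hab : a ≠ b := fun hc => ha'.2 (hc ▸ hb.1)
    refine ⟨b, ⟨hb.2, not_not_intro hb.1⟩, ?_, ?_⟩
    · rw [show insert b (Aᶜ \ {a}) = (insert a (A \ {b}))ᶜ from (compl_insert_diff hab).symm]
      exact Set.mem_image_of_mem _ h2
    · rw [show insert a (Bᶜ \ {b}) = (insert b (B \ {a}))ᶜ from (compl_insert_diff hab.symm).symm]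
      exact Set.mem_image_of_mem _ h1
  have finsd' : ∀ V₁ ∈ compl '' 𝓦, ∀ V₂ ∈ compl '' 𝓦, (sd V₁ V₂).Finite := by
    rintro _ ⟨A, hA, rfl⟩ _ ⟨B, hB, rfl⟩
    rw [sd_compl]
    exact finsd A hA B hB
  have badFin' : ∀ V ∈ compl '' 𝓦, (Bad φ V).Finite := by
    rintro _ ⟨A, hA, rfl⟩
    rw [bad_compl]
    exact badFin A hA
  have minBad' : ∀ V ∈ compl '' 𝓦, 2 * m ≤ (Bad φ V).ncard := by
    rintro _ ⟨A, hA, rfl⟩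
    rw [bad_compl]
    exact minBad A hA
  intro N
  induction N using Nat.strong_induction_on with
  | _ N IH =>
  intro V V₂ hV hV₂ hVmin hV₂min hN
  by_cases hU : ∀ y, φ y = y → (y ∈ V ↔ y ∈ V₂)
  · exact ⟨V, hV, hVmin, rfl, rfl, hU⟩
  · push_neg at hU
    obtain ⟨e, hpe, hne⟩ := hU
    rcases hne with ⟨heV, heV₂⟩ | ⟨heV, heV₂⟩
    · rcases step invol sep finsd badFin minBad hV hV₂ hVmin hV₂min hpe heV heV₂ with
        ⟨Vg, hVg, hVgmin, hKg, hLg, hsdg⟩ | ⟨V₂', hV₂', hV₂'min, hUpres, hsd2⟩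
      · obtain ⟨Vf, hVf, hmin, hK, hL, hUf⟩ :=
          IH (sd Vg V₂).ncard (by omega) Vg V₂ hVg hV₂ hVgmin hV₂min rfl
        exact ⟨Vf, hVf, hmin, by rw [hK, hKg], by rw [hL, hLg], hUf⟩
      · obtain ⟨Vf, hVf, hmin, hK, hL, hUf⟩ :=
          IH (sd V V₂').ncard (by omega) V V₂' hV hV₂' hVmin hV₂'min rfl
        exact ⟨Vf, hVf, hmin, hK, hL, fun y hy => (hUf y hy).trans (hUpres y hy)⟩
    · have hVc : Vᶜ ∈ compl '' 𝓦 := Set.mem_image_of_mem _ hV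
      have hV₂c : V₂ᶜ ∈ compl '' 𝓦 := Set.mem_image_of_mem _ hV₂
      have hVminc : (Bad φ Vᶜ).ncard = 2 * m := by rw [bad_compl]; exact hVmin
      have hV₂minc : (Bad φ V₂ᶜ).ncard = 2 * m := by rw [bad_compl]; exact hV₂min
      rcases step invol sep' finsd' badFin' minBad' hVc hV₂c hVminc hV₂minc hpe
          (by exact heV) (by exact not_not_intro heV₂) with
        ⟨Vg', hVg', hVgmin, hKg, hLg, hsdg⟩ | ⟨V₂'', hV₂'', hV₂''min, hUpres, hsd2⟩
      · obtain ⟨Vg, hVg, rfl⟩ := hVg'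
        rw [bad_compl] at hVgmin
        rw [kbad_compl, kbad_compl] at hKg
        rw [lbad_compl, lbad_compl] at hLg
        rw [sd_compl, sd_compl] at hsdg
        obtain ⟨Vf, hVf, hmin, hK, hL, hUf⟩ :=
          IH (sd Vg V₂).ncard (by omega) Vg V₂ hVg hV₂ hVgmin hV₂min rfl
        exact ⟨Vf, hVf, hmin, by rw [hK, hLg], by rw [hL, hKg], hUf⟩
      · obtain ⟨V₂', hV₂', rfl⟩ := hV₂''
        rw [bad_compl] at hV₂''min
        rw [sd_compl, sd_compl] at hsd2
        obtain ⟨Vf, hVf, hmin, hK, hL, hUf⟩ :=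
          IH (sd V V₂').ncard (by omega) V V₂' hV hV₂' hVmin hV₂''min rfl
        refine ⟨Vf, hVf, hmin, hK, hL, fun y hy => (hUf y hy).trans ?_⟩
        have := hUpres y hy
        simp only [mem_compl_iff] at this
        exact not_iff_not.mp this

end Chain


section Inst

variable {A B C : Type*} [DecidableEq A] [DecidableEq B] [DecidableEq C]

def enc (X : Finset A) (Y' Y : Finset B) (Z : Finset C) : Set ((A ⊕ C) ⊕ B × Bool) :=
  {z | match z with
    | Sum.inl (Sum.inl a) => a ∉ X
    | Sum.inl (Sum.inr c) => c ∈ Z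
    | Sum.inr (b, true) => b ∈ Y'
    | Sum.inr (b, false) => b ∉ Y}

variable {X X₂ : Finset A} {Y' Y Y₂' Y₂ : Finset B} {Z Z₂ : Finset C}

lemma mem_enc_a {a : A} : (Sum.inl (Sum.inl a) : (A ⊕ C) ⊕ B × Bool) ∈ enc X Y' Y Z ↔ a ∉ X :=
  Iff.rfl

lemma mem_enc_c {c : C} : (Sum.inl (Sum.inr c) : (A ⊕ C) ⊕ B × Bool) ∈ enc X Y' Y Z ↔ c ∈ Z :=
  Iff.rfl

lemma mem_enc_bt {b : B} : (Sum.inr (b, true) : (A ⊕ C) ⊕ B × Bool) ∈ enc X Y' Y Z ↔ b ∈ Y' :=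
  Iff.rfl

lemma mem_enc_bf {b : B} : (Sum.inr (b, false) : (A ⊕ C) ⊕ B × Bool) ∈ enc X Y' Y Z ↔ b ∉ Y :=
  Iff.rfl

def phiB : (A ⊕ C) ⊕ B × Bool → (A ⊕ C) ⊕ B × Bool :=
  fun z => match z with
  | Sum.inr (b, t) => Sum.inr (b, !t)
  | w => w

lemma phiB_invol : ∀ z : (A ⊕ C) ⊕ B × Bool, phiB (phiB z) = z := by
  rintro (w | ⟨b, t⟩)
  · rfl
  · simp [phiB]

lemma phiB_inl (w : A ⊕ C) : phiB (Sum.inl w : (A ⊕ C) ⊕ B × Bool) = Sum.inl w := rfl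

lemma phiB_inr (b : B) (t : Bool) :
    phiB (Sum.inr (b, t) : (A ⊕ C) ⊕ B × Bool) = Sum.inr (b, !t) := rfl

-- update lemmas for enc
lemma enc_del_a {a : A} (ha : a ∉ X) :
    enc X Y' Y Z \ {Sum.inl (Sum.inl a)} = enc (insert a X) Y' Y Z := by
  ext z
  rcases z with (a' | c) | ⟨b, t⟩
  · by_cases h : a' = a
    · subst h; simp [enc, ha]
    · simp [enc, h, Finset.mem_insert]
  · simp [enc]
  · cases t <;> simp [enc]

lemma enc_ins_a {a : A} (ha : a ∈ X) :
    insert (Sum.inl (Sum.inl a)) (enc X Y' Y Z) = enc (X.erase a) Y' Y Z := by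
  ext z
  rcases z with (a' | c) | ⟨b, t⟩
  · by_cases h : a' = a
    · subst h; simp [enc, ha]
    · simp [enc, h, Finset.mem_erase]
  · simp [enc]
  · cases t <;> simp [enc]

lemma enc_del_c {c : C} (hc : c ∈ Z) :
    enc X Y' Y Z \ {Sum.inl (Sum.inr c)} = enc X Y' Y (Z.erase c) := by
  ext z
  rcases z with (a' | c') | ⟨b, t⟩
  · simp [enc]
  · by_cases h : c' = c
    · subst h; simp [enc, hc]
    · simp [enc, h, Finset.mem_erase]
  · cases t <;> simp [enc]

lemma enc_ins_c {c : C} (hc : c ∉ Z) :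
    insert (Sum.inl (Sum.inr c)) (enc X Y' Y Z) = enc X Y' Y (insert c Z) := by
  ext z
  rcases z with (a' | c') | ⟨b, t⟩
  · simp [enc]
  · by_cases h : c' = c
    · subst h; simp [enc, hc]
    · simp [enc, h, Finset.mem_insert]
  · cases t <;> simp [enc]

lemma enc_del_bt {b : B} (hb : b ∈ Y') :
    enc X Y' Y Z \ {Sum.inr (b, true)} = enc X (Y'.erase b) Y Z := by
  ext z
  rcases z with (a' | c') | ⟨b', t⟩
  · simp [enc]
  · simp [enc]
  · cases t
    · simp [enc]
    · by_cases h : b' = b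
      · subst h; simp [enc, hb]
      · simp [enc, h, Finset.mem_erase]

lemma enc_ins_bt {b : B} (hb : b ∉ Y') :
    insert (Sum.inr (b, true)) (enc X Y' Y Z) = enc X (insert b Y') Y Z := by
  ext z
  rcases z with (a' | c') | ⟨b', t⟩
  · simp [enc]
  · simp [enc]
  · cases t
    · simp [enc]
    · by_cases h : b' = b
      · subst h; simp [enc, hb]
      · simp [enc, h, Finset.mem_insert]

lemma enc_del_bf {b : B} (hb : b ∉ Y) :
    enc X Y' Y Z \ {Sum.inr (b, false)} = enc X Y' (insert b Y) Z := by
  ext z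
  rcases z with (a' | c') | ⟨b', t⟩
  · simp [enc]
  · simp [enc]
  · cases t
    · by_cases h : b' = b
      · subst h; simp [enc, hb]
      · simp [enc, h, Finset.mem_insert]
    · simp [enc]

lemma enc_ins_bf {b : B} (hb : b ∈ Y) :
    insert (Sum.inr (b, false)) (enc X Y' Y Z) = enc X Y' (Y.erase b) Z := by
  ext z
  rcases z with (a' | c') | ⟨b', t⟩
  · simp [enc]
  · simp [enc]
  · cases t
    · by_cases h : b' = b
      · subst h; simp [enc, hb]
      · simp [enc, h, Finset.mem_erase]
    · simp [enc]

variable (r : Finset A → Finset B → Prop) (s : Finset B → Finset C → Prop)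

def fam : Set (Set ((A ⊕ C) ⊕ B × Bool)) :=
  {V | ∃ X Y' Y Z, r X Y' ∧ s Y Z ∧ V = enc X Y' Y Z}

variable {r} {s}

lemma fam_exchange (hr : ExchAxiom r) (hs : ExchAxiom s) :
    Matroid.ExchangeProperty (· ∈ fam r s) := by
  rintro V₁ V₂ ⟨X₁, Y₁', Y₁, Z₁, hr₁, hs₁, rfl⟩ ⟨X₂, Y₂', Y₂, Z₂, hr₂, hs₂, rfl⟩ e ⟨he1, he2⟩
  rcases e with (a | c) | ⟨b, t⟩
  · -- e = inl (inl a) : a ∉ X₁, a ∈ X₂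
    rw [mem_enc_a] at he1
    rw [mem_enc_a, not_not] at he2
    obtain ⟨v, hvbar, hvex⟩ := hr X₁ Y₁' X₂ Y₂' hr₁ hr₂ (Sum.inl a) he1
    rcases v with a' | b'
    · have hvbar' : a' ∉ X₂ := hvbar
      rcases hvex with heq | ⟨haX, _, _⟩ | ⟨_, ha'X, hrel⟩
      · exact absurd (heq ▸ he2) hvbar'
      · exact absurd haX he1
      · have hne : a ≠ a' := fun hc => hvbar' (hc ▸ he2)
        refine ⟨Sum.inl (Sum.inl a'), ⟨hvbar', not_not_intro ha'X⟩, ?_⟩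
        rw [enc_del_a he1, enc_ins_a (Finset.mem_insert_of_mem ha'X),
          Finset.erase_insert_of_ne hne]
        exact ⟨_, _, _, _, hrel, hs₁, rfl⟩
    · have hvbar' : b' ∈ Y₂' := hvbar
      rcases hvex with ⟨haX, _, _⟩ | ⟨_, hb'Y, hrel⟩
      · exact absurd haX he1
      · refine ⟨Sum.inr (b', true), ⟨hvbar', hb'Y⟩, ?_⟩
        rw [enc_del_a he1, enc_ins_bt hb'Y]
        exact ⟨_, _, _, _, hrel, hs₁, rfl⟩
  · -- e = inl (inr c) : c ∈ Z₁, c ∉ Z₂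
    rw [mem_enc_c] at he1
    rw [mem_enc_c] at he2
    obtain ⟨v, hvbar, hvex⟩ := hs Y₁ Z₁ Y₂ Z₂ hs₁ hs₂ (Sum.inr c) he1
    rcases v with b | c'
    · have hvbar' : b ∉ Y₂ := hvbar
      rcases hvex with ⟨_, hbY, hrel⟩ | ⟨hcZ, _, _⟩
      · refine ⟨Sum.inr (b, false), ⟨hvbar', not_not_intro hbY⟩, ?_⟩
        rw [enc_del_c he1, enc_ins_bf hbY]
        exact ⟨_, _, _, _, hr₁, hrel, rfl⟩
      · exact absurd he1 hcZ
    · have hvbar' : c' ∈ Z₂ := hvbar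
      rcases hvex with heq | ⟨_, hc'Z, hrel⟩ | ⟨hcZ, _, _⟩
      · exact absurd (heq ▸ hvbar') he2
      · refine ⟨Sum.inl (Sum.inr c'), ⟨hvbar', hc'Z⟩, ?_⟩
        rw [enc_del_c he1, enc_ins_c (fun hmem => hc'Z (Finset.mem_of_mem_erase hmem))]
        exact ⟨_, _, _, _, hr₁, hrel, rfl⟩
      · exact absurd he1 hcZ
  · rcases t with _ | _
    · -- e = inr (b, false) : b ∉ Y₁, b ∈ Y₂
      rw [mem_enc_bf] at he1
      rw [mem_enc_bf, not_not] at he2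
      obtain ⟨v, hvbar, hvex⟩ := hs Y₁ Z₁ Y₂ Z₂ hs₁ hs₂ (Sum.inl b) he1
      rcases v with b' | c
      · have hvbar' : b' ∉ Y₂ := hvbar
        rcases hvex with heq | ⟨hbY, _, _⟩ | ⟨_, hb'Y, hrel⟩
        · exact absurd (heq ▸ he2) hvbar'
        · exact absurd hbY he1
        · have hne : b ≠ b' := fun hc => hvbar' (hc ▸ he2)
          refine ⟨Sum.inr (b', false), ⟨hvbar', not_not_intro hb'Y⟩, ?_⟩
          rw [enc_del_bf he1, enc_ins_bf (Finset.mem_insert_of_mem hb'Y),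
            Finset.erase_insert_of_ne hne]
          exact ⟨_, _, _, _, hr₁, hrel, rfl⟩
      · have hvbar' : c ∈ Z₂ := hvbar
        rcases hvex with ⟨hbY, _, _⟩ | ⟨_, hcZ, hrel⟩
        · exact absurd hbY he1
        · refine ⟨Sum.inl (Sum.inr c), ⟨hvbar', hcZ⟩, ?_⟩
          rw [enc_del_bf he1, enc_ins_c hcZ]
          exact ⟨_, _, _, _, hr₁, hrel, rfl⟩
    · -- e = inr (b, true) : b ∈ Y₁', b ∉ Y₂'
      rw [mem_enc_bt] at he1
      rw [mem_enc_bt] at he2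
      obtain ⟨v, hvbar, hvex⟩ := hr X₁ Y₁' X₂ Y₂' hr₁ hr₂ (Sum.inr b) he1
      rcases v with a | b'
      · have hvbar' : a ∉ X₂ := hvbar
        rcases hvex with ⟨_, haX, hrel⟩ | ⟨hbY, _, _⟩
        · refine ⟨Sum.inl (Sum.inl a), ⟨hvbar', not_not_intro haX⟩, ?_⟩
          rw [enc_del_bt he1, enc_ins_a haX]
          exact ⟨_, _, _, _, hrel, hs₁, rfl⟩
        · exact absurd he1 hbY
      · have hvbar' : b' ∈ Y₂' := hvbar
        rcases hvex with heq | ⟨_, hb'Y, hrel⟩ | ⟨hbY, _, _⟩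
        · exact absurd (heq ▸ hvbar') he2
        · refine ⟨Sum.inr (b', true), ⟨hvbar', hb'Y⟩, ?_⟩
          rw [enc_del_bt he1, enc_ins_bt (fun hmem => hb'Y (Finset.mem_of_mem_erase hmem))]
          exact ⟨_, _, _, _, hrel, hs₁, rfl⟩
        · exact absurd he1 hbY


lemma sd_enc_finite : (sd (enc X Y' Y Z) (enc X₂ Y₂' Y₂ Z₂)).Finite := by
  classical
  apply Set.Finite.subset (Finset.finite_toSet
    (((X ∪ X₂).image fun a => (Sum.inl (Sum.inl a) : (A ⊕ C) ⊕ B × Bool)) ∪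
      ((Z ∪ Z₂).image fun c => (Sum.inl (Sum.inr c) : (A ⊕ C) ⊕ B × Bool)) ∪
      (((Y' ∪ Y₂' ∪ Y ∪ Y₂) ×ˢ (Finset.univ : Finset Bool)).image Sum.inr)))
  intro z hz
  simp only [Finset.coe_union, Set.mem_union, Finset.mem_coe, Finset.mem_image,
    Finset.mem_union, Finset.mem_product, Finset.mem_univ]
  rcases z with (a | c) | ⟨b, t⟩
  · refine Or.inl (Or.inl ⟨a, ?_, rfl⟩)
    rcases hz with ⟨h1, h2⟩ | ⟨h1, h2⟩
    · rw [mem_enc_a, not_not] at h2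
      exact Or.inr h2
    · rw [mem_enc_a, not_not] at h2
      exact Or.inl h2
  · refine Or.inl (Or.inr ⟨c, ?_, rfl⟩)
    rcases hz with ⟨h1, h2⟩ | ⟨h1, h2⟩
    · exact Or.inl h1
    · exact Or.inr h1
  · refine Or.inr ⟨(b, t), ⟨?_, trivial⟩, rfl⟩
    rcases t with _ | _
    · rcases hz with ⟨h1, h2⟩ | ⟨h1, h2⟩
      · rw [mem_enc_bf, not_not] at h2
        exact Or.inr h2
      · rw [mem_enc_bf, not_not] at h2
        exact Or.inl (Or.inr h2)
    · rcases hz with ⟨h1, h2⟩ | ⟨h1, h2⟩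
      · rw [mem_enc_bt] at h1
        exact Or.inl (Or.inl (Or.inl h1))
      · rw [mem_enc_bt] at h1
        exact Or.inl (Or.inl (Or.inr h1))

lemma bad_enc_eq : Bad phiB (enc X Y' Y Z) =
    ↑((((Y \ Y') ∪ (Y' \ Y)) ×ˢ (Finset.univ : Finset Bool)).image (Sum.inr : B × Bool → (A ⊕ C) ⊕ B × Bool)) := by
  classical
  ext z
  rcases z with (w | ⟨b, t⟩)
  · simp [Bad, phiB]
  · rcases t with _ | _
    · simp only [Bad, phiB, mem_setOf_eq, mem_enc_bf, mem_enc_bt, Finset.coe_image,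
        Set.mem_image, Finset.mem_coe, Finset.mem_product, Finset.mem_univ, and_true,
        Finset.mem_union, Finset.mem_sdiff, Bool.not_false, ne_eq, Sum.inr.injEq,
        Prod.mk.injEq]
      constructor
      · rintro ⟨-, h⟩
        refine ⟨(b, false), ?_, rfl⟩
        by_cases hbY : b ∈ Y
        · exact Or.inl ⟨hbY, fun hbY' => (h.mpr hbY') hbY⟩
        · exact Or.inr ⟨h.mp hbY, hbY⟩
      · rintro ⟨p, hb', rfl⟩
        refine ⟨by simp, ?_⟩
        rcases hb' with ⟨h1, h2⟩ | ⟨h1, h2⟩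
        · exact iff_of_false (not_not_intro h1) h2
        · exact iff_of_true h2 h1
    · simp only [Bad, phiB, mem_setOf_eq, mem_enc_bf, mem_enc_bt, Finset.coe_image,
        Set.mem_image, Finset.mem_coe, Finset.mem_product, Finset.mem_univ, and_true,
        Finset.mem_union, Finset.mem_sdiff, Bool.not_true, ne_eq, Sum.inr.injEq,
        Prod.mk.injEq]
      constructor
      · rintro ⟨-, h⟩
        refine ⟨(b, true), ?_, rfl⟩
        by_cases hbY : b ∈ Y'
        · exact Or.inr ⟨hbY, h.mp hbY⟩
        · exact Or.inl ⟨by_contra fun hc => hbY (h.mpr hc), hbY⟩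
      · rintro ⟨p, hb', rfl⟩
        refine ⟨by simp, ?_⟩
        rcases hb' with ⟨h1, h2⟩ | ⟨h1, h2⟩
        · exact iff_of_false h2 (not_not_intro h1)
        · exact iff_of_true h1 h2

lemma kbad_enc_eq : KBad phiB (enc X Y' Y Z) =
    ↑(((Y \ Y') ×ˢ (Finset.univ : Finset Bool)).image (Sum.inr : B × Bool → (A ⊕ C) ⊕ B × Bool)) := by
  classical
  ext z
  rcases z with (w | ⟨b, t⟩)
  · simp [KBad, phiB]
  · rcases t with _ | _
    · simp only [KBad, phiB, mem_setOf_eq, mem_enc_bf, mem_enc_bt, Finset.coe_image,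
        Set.mem_image, Finset.mem_coe, Finset.mem_product, Finset.mem_univ, and_true,
        Finset.mem_sdiff, Bool.not_false, ne_eq, Sum.inr.injEq, Prod.mk.injEq, not_not]
      constructor
      · rintro ⟨-, h1, h2⟩
        exact ⟨(b, false),  ⟨h1, h2⟩, rfl⟩
      · rintro ⟨p, hb', rfl⟩
        exact ⟨by simp, hb'.1, hb'.2⟩
    · simp only [KBad, phiB, mem_setOf_eq, mem_enc_bf, mem_enc_bt, Finset.coe_image,
        Set.mem_image, Finset.mem_coe, Finset.mem_product, Finset.mem_univ, and_true,
        Finset.mem_sdiff, Bool.not_true, ne_eq, Sum.inr.injEq, Prod.mk.injEq, not_not]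
      constructor
      · rintro ⟨-, h1, h2⟩
        exact ⟨(b, true),  ⟨h2, h1⟩, rfl⟩
      · rintro ⟨p, hb', rfl⟩
        exact ⟨by simp, hb'.2, hb'.1⟩

lemma lbad_enc_eq : LBad phiB (enc X Y' Y Z) =
    ↑(((Y' \ Y) ×ˢ (Finset.univ : Finset Bool)).image (Sum.inr : B × Bool → (A ⊕ C) ⊕ B × Bool)) := by
  classical
  ext z
  rcases z with (w | ⟨b, t⟩)
  · simp [LBad, phiB]
  · rcases t with _ | _
    · simp only [LBad, phiB, mem_setOf_eq, mem_enc_bf, mem_enc_bt, Finset.coe_image,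
        Set.mem_image, Finset.mem_coe, Finset.mem_product, Finset.mem_univ, and_true,
        Finset.mem_sdiff, Bool.not_false, ne_eq, Sum.inr.injEq, Prod.mk.injEq]
      constructor
      · rintro ⟨-, h1, h2⟩
        exact ⟨(b, false),  ⟨h2, h1⟩, rfl⟩
      · rintro ⟨p, hb', rfl⟩
        exact ⟨by simp, hb'.2, hb'.1⟩
    · simp only [LBad, phiB, mem_setOf_eq, mem_enc_bf, mem_enc_bt, Finset.coe_image,
        Set.mem_image, Finset.mem_coe, Finset.mem_product, Finset.mem_univ, and_true,
        Finset.mem_sdiff, Bool.not_true, ne_eq, Sum.inr.injEq, Prod.mk.injEq]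
      constructor
      · rintro ⟨-, h1, h2⟩
        exact ⟨(b, true),  ⟨h1, h2⟩, rfl⟩
      · rintro ⟨p, hb', rfl⟩
        exact ⟨by simp, hb'.1, hb'.2⟩

lemma ncard_bad_enc :
    (Bad phiB (enc X Y' Y Z)).ncard = 2 * ((Y \ Y').card + (Y' \ Y).card) := by
  classical
  rw [bad_enc_eq, Set.ncard_coe_finset,
    Finset.card_image_of_injective _ Sum.inr_injective, Finset.card_product,
    Finset.card_union_of_disjoint disjoint_sdiff_sdiff]
  rw [Finset.card_univ, Fintype.card_bool]
  ring

lemma mem_kbad_enc {b : B} :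
    (Sum.inr (b, true) : (A ⊕ C) ⊕ B × Bool) ∈ KBad phiB (enc X Y' Y Z) ↔ b ∈ Y \ Y' := by
  classical
  rw [kbad_enc_eq]
  simp

lemma mem_lbad_enc {b : B} :
    (Sum.inr (b, true) : (A ⊕ C) ⊕ B × Bool) ∈ LBad phiB (enc X Y' Y Z) ↔ b ∈ Y' \ Y := by
  classical
  rw [lbad_enc_eq]
  simp


end Inst

end LaxAux

/-- Structure theorem for lax composition: if `λ • μ` has type `(k,l)` then there
exist disjoint `K, L ⊆ B` with `|K| = k`, `|L| = l` such that
`λ • μ = λ ∘ I_{K,L} ∘ μ`; moreover this equation holds for any such disjoint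
`K, L` for which the right-hand side is nonempty. -/
theorem laxComp_structure {A B C : Type*} [DecidableEq A] [DecidableEq B] [DecidableEq C]
    (r : Finset A → Finset B → Prop) (s : Finset B → Finset C → Prop)
    (hr : ExchAxiom r) (hs : ExchAxiom s)
    (hrne : ∃ X Y, r X Y) (hsne : ∃ Y Z, s Y Z)
    (k l : ℕ) (hkl : k + l = totalType r s) (hne : ∃ X Z, BComp r s k l X Z) :
    (∃ K L : Finset B, Disjoint K L ∧ K.card = k ∧ L.card = l ∧
      LaxComp r s = RelComp (RelComp r (PartialId K L)) s) ∧
    (∀ K L : Finset B, Disjoint K L → K.card = k → L.card = l →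
      (∃ X Z, RelComp (RelComp r (PartialId K L)) s X Z) →
      LaxComp r s = RelComp (RelComp r (PartialId K L)) s) := by
  classical
  have minB : ∀ V ∈ LaxAux.fam r s, 2 * (totalType r s) ≤ (LaxAux.Bad LaxAux.phiB V).ncard := by
    rintro _ ⟨X, Y', Y, Z, hrx, hsy, rfl⟩
    rw [LaxAux.ncard_bad_enc]
    have hle : totalType r s ≤ (Y \ Y').card + (Y' \ Y).card :=
      Nat.sInf_le ⟨(Y \ Y').card, (Y' \ Y).card, rfl, X, Z, Y, Y', hrx, hsy, rfl, rfl⟩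
    omega
  have badF : ∀ V ∈ LaxAux.fam r s, (LaxAux.Bad LaxAux.phiB V).Finite := by
    rintro _ ⟨X, Y', Y, Z, hrx, hsy, rfl⟩
    rw [LaxAux.bad_enc_eq]
    exact Finset.finite_toSet _
  have finsd : ∀ V₁ ∈ LaxAux.fam r s, ∀ V₂ ∈ LaxAux.fam r s, (LaxAux.sd V₁ V₂).Finite := by
    rintro _ ⟨X, Y', Y, Z, hrx, hsy, rfl⟩ _ ⟨X₂, Y₂', Y₂, Z₂, hrx₂, hsy₂, rfl⟩
    exact LaxAux.sd_enc_finite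
  have hexch := LaxAux.fam_exchange hr hs
  have sep : ∀ V₁ ∈ LaxAux.fam r s, ∀ V₂ ∈ LaxAux.fam r s, ∀ e ∈ V₁ \ V₂,
      ∃ f ∈ V₂ \ V₁, insert f (V₁ \ {e}) ∈ LaxAux.fam r s ∧
        insert e (V₂ \ {f}) ∈ LaxAux.fam r s :=
    fun V₁ h1 V₂ h2 e he =>
      LaxAux.strong_exchange (LaxAux.fam r s) hexch h1 h2 (finsd _ h1 _ h2) he
  have MAIN : ∀ K L : Finset B,
      (∃ X₁ Z₁ Y₁ Y₁', r X₁ Y₁' ∧ s Y₁ Z₁ ∧ Y₁ \ Y₁' = K ∧ Y₁' \ Y₁ = L) →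
      K.card + L.card = totalType r s →
      LaxComp r s = RelComp (RelComp r (PartialId K L)) s := by
    rintro K L ⟨X₁, Z₁, Y₁, Y₁', hr₁, hs₁, hK, hL⟩ hcard
    funext X Z
    apply propext
    constructor
    · rintro ⟨k₂, l₂, hkl₂, Y₂, Y₂', hr₂, hs₂, hk₂, hl₂⟩
      have hV₁ : LaxAux.enc X₁ Y₁' Y₁ Z₁ ∈ LaxAux.fam r s := ⟨_, _, _, _, hr₁, hs₁, rfl⟩
      have hV₂ : LaxAux.enc X Y₂' Y₂ Z ∈ LaxAux.fam r s := ⟨_, _, _, _, hr₂, hs₂, rfl⟩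
      have hmin₁ : (LaxAux.Bad LaxAux.phiB (LaxAux.enc X₁ Y₁' Y₁ Z₁)).ncard
          = 2 * (totalType r s) := by
        rw [LaxAux.ncard_bad_enc, hK, hL, hcard]
      have hmin₂ : (LaxAux.Bad LaxAux.phiB (LaxAux.enc X Y₂' Y₂ Z)).ncard
          = 2 * (totalType r s) := by
        rw [LaxAux.ncard_bad_enc, hk₂, hl₂, hkl₂]
      obtain ⟨Vf, hVf, hminf, hKf, hLf, hUf⟩ :=
        LaxAux.transport LaxAux.phiB_invol sep finsd badF minB _ _ _ hV₁ hV₂ hmin₁ hmin₂ rfl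
      obtain ⟨Xf, Yf', Yf, Zf, hrf, hsf, rfl⟩ := hVf
      have hXf : Xf = X := by
        apply Finset.ext
        intro a
        have := hUf (Sum.inl (Sum.inl a)) rfl
        rw [LaxAux.mem_enc_a, LaxAux.mem_enc_a] at this
        exact not_iff_not.mp this
      have hZf : Zf = Z := by
        apply Finset.ext
        intro c
        have := hUf (Sum.inl (Sum.inr c)) rfl
        rw [LaxAux.mem_enc_c, LaxAux.mem_enc_c] at this
        exact this
      have hKff : Yf \ Yf' = K := by
        rw [← hK]
        apply Finset.ext
        intro b
        rw [← LaxAux.mem_kbad_enc (X := Xf) (Z := Zf), ← LaxAux.mem_kbad_enc (X := X₁) (Z := Z₁),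
          hKf]
      have hLff : Yf' \ Yf = L := by
        rw [← hL]
        apply Finset.ext
        intro b
        rw [← LaxAux.mem_lbad_enc (X := Xf) (Z := Zf), ← LaxAux.mem_lbad_enc (X := X₁) (Z := Z₁),
          hLf]
      rw [hXf] at hrf
      rw [hZf] at hsf
      exact ⟨Yf, ⟨Yf', hrf, hKff, hLff⟩, hsf⟩
    · rintro ⟨Y₀, ⟨Y₀', hr₀, hPK, hPL⟩, hs₀⟩
      refine ⟨K.card, L.card, hcard, Y₀, Y₀', hr₀, hs₀, by rw [hPK], by rw [hPL]⟩
  constructor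
  · obtain ⟨X₀, Z₀, Y₀, Y₀', hr₀, hs₀, hk₀, hl₀⟩ := hne
    exact ⟨Y₀ \ Y₀', Y₀' \ Y₀, disjoint_sdiff_sdiff, hk₀, hl₀,
      MAIN _ _ ⟨X₀, Z₀, Y₀, Y₀', hr₀, hs₀, rfl, rfl⟩ (by rw [hk₀, hl₀]; exact hkl)⟩
  · rintro K L hdisj hKc hLc ⟨X₀, Z₀, Y₀, ⟨Y₀', hr₀, hPK, hPL⟩, hs₀⟩
    exact MAIN K L ⟨X₀, Z₀, Y₀, Y₀', hr₀, hs₀, hPK, hPL⟩ (by rw [hKc, hLc]; exact hkl)
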